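/- Let q be a quadratic form on a finite-dimensional real vector space V and G: V → ℝ a homogeneous polynomial function of degree 2(n−1), n ≥ 2. Suppose G and all its derivatives up to order n−2 vanish on the zero set Z(q) of q, and suppose Z(q) is Zariski-dense enough that any polynomial vanishing to order n−1 along Z(q) is divisible by q^{n−1} (e.g. q is irreducible and nondegenerate of rank ≥ 3 over ℂ). Then G = C·q^{n−1} for some constant C ∈ ℝ. -/

import Mathlib

open MvPolynomial

private lemma fujiki_term_euler {m : ℕ} (v : Fin m →₀ ℕ) (a : ℂ) (i : Fin m) :
    X i * pderiv i (monomial v a) = monomial v (a * (v i : ℂ)) := by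
  rw [pderiv_monomial]
  rcases Nat.eq_zero_or_pos (v i) with h | h
  · simp [h]
  · rw [X, monomial_mul, one_mul]
    congr 1
    rw [add_tsub_cancel_of_le]
    rwa [Finsupp.single_le_iff]

private lemma fujiki_euler {m d : ℕ} {f : MvPolynomial (Fin m) ℂ} (hf : f.IsHomogeneous d) :
    ∑ i : Fin m, X i * pderiv i f = (d : ℂ) • f := by
  conv_lhs => rw [f.as_sum]
  conv_rhs => rw [f.as_sum]
  rw [Finset.smul_sum]
  simp only [map_sum, Finset.mul_sum]
  rw [Finset.sum_comm]
  refine Finset.sum_congr rfl fun v hv => ?_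
  simp only [fujiki_term_euler]
  rw [← map_sum, ← Finset.mul_sum, smul_monomial, smul_eq_mul, mul_comm ((d : ℂ))]
  congr 1
  rw [← Nat.cast_sum]
  congr 1
  have hdeg : v.degree = d := by
    have h1 := hf (mem_support_iff.mp hv)
    rw [Finsupp.degree_eq_weight_one]; exact h1
  rw [← hdeg, Finsupp.degree]
  norm_cast
  symm
  apply Finset.sum_subset (Finset.subset_univ _)
  intro x _ hx
  exact Finsupp.notMem_support_iff.mp hx

private lemma fujiki_exists_pderiv_ne {m : ℕ} {q : MvPolynomial (Fin m) ℂ}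
    (hq : q.IsHomogeneous 2) (hq0 : q ≠ 0) : ∃ i, pderiv i q ≠ 0 := by
  by_contra h
  push_neg at h
  have := fujiki_euler hq
  simp only [h, mul_zero, Finset.sum_const_zero] at this
  have h2 : ((2 : ℕ) : ℂ) ≠ 0 := by norm_num
  exact hq0 ((smul_eq_zero.mp this.symm).resolve_left h2)

private lemma fujiki_deg_add {m : ℕ} (a b : Fin m →₀ ℕ) :
    (a + b).degree = a.degree + b.degree := by
  simp only [Finsupp.degree_eq_weight_one]
  exact map_add _ a b

private lemma fujiki_deg_single {m : ℕ} (i : Fin m) : (Finsupp.single i 1).degree = 1 := by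
  exact Finsupp.degree_single i 1

private lemma fujiki_pderiv_homog {m d : ℕ} {f : MvPolynomial (Fin m) ℂ}
    (hf : f.IsHomogeneous d) (i : Fin m) : (pderiv i f).IsHomogeneous (d - 1) := by
  conv_lhs => rw [f.as_sum]
  rw [map_sum]
  apply MvPolynomial.IsHomogeneous.sum
  intro v hv
  rw [pderiv_monomial]
  rcases Nat.eq_zero_or_pos (v i) with h | h
  · rw [h]; norm_num
    exact isHomogeneous_zero _ _ _
  · apply isHomogeneous_monomial
    have hdeg : v.degree = d := by
      have h1 := hf (mem_support_iff.mp hv)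
      rw [Finsupp.degree_eq_weight_one]; exact h1
    have hsub : (v - Finsupp.single i 1) + Finsupp.single i 1 = v :=
      tsub_add_cancel_of_le (by rwa [Finsupp.single_le_iff])
    have h2 := congrArg Finsupp.degree hsub
    rw [fujiki_deg_add, fujiki_deg_single, hdeg] at h2
    omega

private lemma fujiki_hom_dvd {m da db : ℕ} {a b : MvPolynomial (Fin m) ℂ}
    (ha : a.IsHomogeneous da) (hb : b.IsHomogeneous db) (hlt : db < da)
    (hdvd : a ∣ b) : b = 0 := by
  obtain ⟨c, rfl⟩ := hdvd
  have h1 : homogeneousComponent db (a * c) = a * c := by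
    rw [homogeneousComponent_of_mem ((mem_homogeneousSubmodule _ _).mpr hb), if_pos rfl]
  have h2 : homogeneousComponent db (a * c) = 0 := by
    conv_lhs => rw [show a * c = ∑ k ∈ Finset.range (c.totalDegree + 1),
      a * homogeneousComponent k c by rw [← Finset.mul_sum, sum_homogeneousComponent]]
    rw [map_sum]
    apply Finset.sum_eq_zero
    intro k _
    rw [homogeneousComponent_of_mem ((mem_homogeneousSubmodule _ _).mpr
      (ha.mul (homogeneousComponent_isHomogeneous k c))), if_neg (by omega)]
  rw [← h1, h2]

private lemma fujiki_nss {m : ℕ} {q : MvPolynomial (Fin m) ℂ} (hq : Prime q)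
    (p : MvPolynomial (Fin m) ℂ)
    (h : ∀ x : Fin m → ℂ, eval x q = 0 → eval x p = 0) : q ∣ p := by
  have hmem : p ∈ MvPolynomial.vanishingIdeal ℂ (MvPolynomial.zeroLocus ℂ (Ideal.span {q})) := by
    rw [mem_vanishingIdeal_iff]
    intro x hx
    change eval x p = 0
    exact h x (hx q (Ideal.subset_span rfl))
  rw [vanishingIdeal_zeroLocus_eq_radical] at hmem
  have hprime : (Ideal.span {q}).IsPrime := (Ideal.span_singleton_prime hq.ne_zero).mpr hq
  rw [hprime.radical] at hmem
  exact Ideal.mem_span_singleton.mp hmem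

/-- Algebraic heart of the Fujiki relations: if `q` is an irreducible quadratic form in
`m ≥ 3` variables over `ℂ` and `G` is homogeneous of degree `2(n−1)` such that `G` and
all of its partial derivatives of order `≤ n−2` vanish on the quadric `{q = 0}`, then
`G = C · q^(n−1)` for some constant `C`. -/
theorem stmt_7 (m n : ℕ) (hm : 3 ≤ m) (hn : 2 ≤ n)
    (q G : MvPolynomial (Fin m) ℂ)
    (hq_irred : Irreducible q) (hq_homog : q.IsHomogeneous 2)
    (hG_homog : G.IsHomogeneous (2 * (n - 1)))
    (hvanish : ∀ (k : ℕ), k ≤ n - 2 → ∀ (d : Fin k → Fin m) (x : Fin m → ℂ),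
      eval x q = 0 →
      eval x ((List.ofFn d).foldl (fun p i => pderiv i p) G) = 0) :
    ∃ C : ℂ, G = C • q ^ (n - 1) := by
  have hq0 : q ≠ 0 := hq_irred.ne_zero
  have hqprime : Prime q := hq_irred.prime
  obtain ⟨i0, hi0⟩ := fujiki_exists_pderiv_ne hq_homog hq0
  have hqnd : ¬ q ∣ pderiv i0 q := fun hdvd =>
    hi0 (fujiki_hom_dvd hq_homog (fujiki_pderiv_homog hq_homog i0) (by norm_num) hdvd)
  have hvanish' : ∀ l : List (Fin m), l.length ≤ n - 2 → ∀ x, eval x q = 0 →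
      eval x (l.foldl (fun p i => pderiv i p) G) = 0 := by
    intro l hl x hx
    have := hvanish l.length hl l.get x hx
    rwa [List.ofFn_get] at this
  have key : ∀ j : ℕ, ∀ l : List (Fin m), l.length + j ≤ n - 1 →
      q ^ j ∣ l.foldl (fun p i => pderiv i p) G := by
    intro j
    induction j with
    | zero => intro l _; simp
    | succ j ih =>
      intro l hl
      rcases Nat.eq_zero_or_pos j with hj | hj
      · subst hj
        rw [pow_one]
        exact fujiki_nss hqprime _ (hvanish' l (by omega))
      · obtain ⟨H, hH⟩ := ih l (by omega)
        have hpd : q ^ j ∣ pderiv i0 (l.foldl (fun p i => pderiv i p) G) := by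
          have := ih (l ++ [i0]) (by simp only [List.length_append, List.length_singleton]; omega)
          rwa [List.foldl_append, List.foldl_cons, List.foldl_nil] at this
        rw [hH, pderiv_mul, pderiv_pow] at hpd
        have h1 : q ^ j ∣ (↑j : MvPolynomial (Fin m) ℂ) * q ^ (j - 1) * pderiv i0 q * H :=
          (dvd_add_right (dvd_mul_right (q ^ j) (pderiv i0 H))).mp
            (by rwa [add_comm] at hpd)
        have hqj : q ^ j = q ^ (j - 1) * q := by
          rw [← pow_succ]; congr 1; omega
        have h2 : q ∣ (↑j : MvPolynomial (Fin m) ℂ) * (pderiv i0 q * H) := by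
          have h3 : q ^ (j - 1) * q ∣ q ^ (j - 1) *
              ((↑j : MvPolynomial (Fin m) ℂ) * (pderiv i0 q * H)) := by
            rw [← hqj]
            convert h1 using 1
            ring
          exact (mul_dvd_mul_iff_left (pow_ne_zero (j - 1) hq0)).mp h3
        have hjne : ¬ q ∣ (↑j : MvPolynomial (Fin m) ℂ) := by
          intro hdvd
          have hj0 : (↑j : MvPolynomial (Fin m) ℂ) ≠ 0 := by
            rw [← map_natCast (C : ℂ →+* MvPolynomial (Fin m) ℂ) j]
            exact C_ne_zero.mpr (Nat.cast_ne_zero.mpr (by omega))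
          apply hj0
          apply fujiki_hom_dvd hq_homog (db := 0) _ (by norm_num) hdvd
          rw [← map_natCast (C : ℂ →+* MvPolynomial (Fin m) ℂ) j]
          exact isHomogeneous_C _ _
        have h4 : q ∣ pderiv i0 q * H := ((hqprime.2.2 _ _ h2).resolve_left hjne)
        have h5 : q ∣ H := (hqprime.2.2 _ _ h4).resolve_left hqnd
        obtain ⟨K, hK⟩ := h5
        exact Dvd.intro K (by rw [hH, hK]; ring)
  obtain ⟨H, hGH⟩ := key (n - 1) [] (by simp)
  simp only [List.foldl_nil] at hGH
  have hqpow : (q ^ (n - 1)).IsHomogeneous (2 * (n - 1)) := hq_homog.pow _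
  have hqpow0 : q ^ (n - 1) ≠ 0 := pow_ne_zero _ hq0
  have hHk : ∀ k ∈ Finset.range (H.totalDegree + 1), k ≠ 0 → homogeneousComponent k H = 0 := by
    intro k hk hk0
    have e1 : homogeneousComponent (2 * (n - 1) + k) G = 0 := by
      rw [homogeneousComponent_of_mem ((mem_homogeneousSubmodule _ _).mpr hG_homog),
        if_neg (by omega)]
    have e2 : homogeneousComponent (2 * (n - 1) + k) G =
        q ^ (n - 1) * homogeneousComponent k H := by
      conv_lhs => rw [hGH, show q ^ (n - 1) * H = ∑ j ∈ Finset.range (H.totalDegree + 1),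
        q ^ (n - 1) * homogeneousComponent j H by rw [← Finset.mul_sum, sum_homogeneousComponent]]
      rw [map_sum, Finset.sum_eq_single k]
      · rw [homogeneousComponent_of_mem ((mem_homogeneousSubmodule _ _).mpr
          (hqpow.mul (homogeneousComponent_isHomogeneous k H))), if_pos rfl]
      · intro j _ hjk
        rw [homogeneousComponent_of_mem ((mem_homogeneousSubmodule _ _).mpr
          (hqpow.mul (homogeneousComponent_isHomogeneous j H))), if_neg (by omega)]
      · intro hkn
        exact absurd hk hkn
    exact (mul_eq_zero.mp (e2.symm.trans e1)).resolve_left hqpow0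
  have hHC : H = C (coeff 0 H) := by
    conv_lhs => rw [← sum_homogeneousComponent H]
    rw [Finset.sum_eq_single 0]
    · exact homogeneousComponent_zero H
    · intro j hj hj0
      exact hHk j hj hj0
    · intro h0
      exact absurd (Finset.mem_range.mpr (Nat.succ_pos _)) h0
  refine ⟨coeff 0 H, ?_⟩
  rw [hGH, smul_eq_C_mul, mul_comm]
  exact congrArg (· * q ^ (n - 1)) hHC
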